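/- arXiv:2503.07461 — 2 statements merged into one kernel-verified Lean document; each statement's English description precedes it below -/
import Mathlib

section
/- Fix P > 0, X ≥ 0, Z ≥ 0, D with 0 < D ≤ P, and v ≤ 0 (representing V_s ≤ 0), η_c, η_d ∈ (0,1], discount factor δ := e^{−rt} > 0. Define on the set B := ({0} × [0,Γ]) ∪ ([0,1] × {0}) the function F(a,c) := (η_c·a·P − c/η_d)·v + δ·X·(D − (1−a)·P − c) − δ·Z·min(D, (1−a)·P + c). Then the minimum of F over B is attained at: (0,Γ) if −v ≤ δ·η_d·X; at (0,0) if δ·η_d·X ≤ −v ≤ (δ/η_c)·X; at (1 − D/P, 0) if (δ/η_c)·X ≤ −v ≤ (δ/η_c)·(X + Z); and at (1,0) if (δ/η_c)·(X + Z) ≤ −v. -/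
open Set

set_option maxHeartbeats 1600000 in
theorem stmt_3 (P Γ X Z D v ηc ηd δ : ℝ)
    (hP : 0 < P) (hΓ : 0 ≤ Γ) (hX : 0 ≤ X) (hZ : 0 ≤ Z)
    (hD : 0 < D) (hDP : D ≤ P) (hv : v ≤ 0)
    (hηc : ηc ∈ Ioc (0:ℝ) 1) (hηd : ηd ∈ Ioc (0:ℝ) 1) (hδ : 0 < δ)
    (B : Set (ℝ × ℝ)) (hB : B = ({0} ×ˢ Icc (0:ℝ) Γ) ∪ (Icc (0:ℝ) 1 ×ˢ {0}))
    (F : ℝ × ℝ → ℝ)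
    (hF : F = fun q => (ηc * q.1 * P - q.2 / ηd) * v
        + δ * X * (D - (1 - q.1) * P - q.2)
        - δ * Z * min D ((1 - q.1) * P + q.2)) :
    (-v ≤ δ * ηd * X → IsMinOn F B (0, Γ)) ∧
    (δ * ηd * X ≤ -v ∧ -v ≤ (δ / ηc) * X → IsMinOn F B (0, 0)) ∧
    ((δ / ηc) * X ≤ -v ∧ -v ≤ (δ / ηc) * (X + Z) → IsMinOn F B (1 - D / P, 0)) ∧
    ((δ / ηc) * (X + Z) ≤ -v → IsMinOn F B (1, 0)) := by
  obtain ⟨hηc0, hηc1⟩ := hηc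
  obtain ⟨hηd0, hηd1⟩ := hηd
  subst hB hF
  have hvneg : 0 ≤ -v := by linarith
  -- transfer lemmas to eliminate divisions by ηc
  have hdc : ∀ y : ℝ, δ / ηc * y ≤ -v → δ * y ≤ -v * ηc := by
    intro y hy
    have h2 := mul_le_mul_of_nonneg_right hy hηc0.le
    have h3 : δ / ηc * y * ηc = δ * y := by field_simp
    rw [h3] at h2
    linarith
  have hcd : ∀ y : ℝ, -v ≤ δ / ηc * y → -v * ηc ≤ δ * y := by
    intro y hy
    have h2 := mul_le_mul_of_nonneg_right hy hηc0.le
    have h3 : δ / ηc * y * ηc = δ * y := by field_simp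
    rw [h3] at h2
    linarith
  refine ⟨?_, ?_, ?_, ?_⟩
  -- Case 1 : minimum at (0, Γ)
  · intro h
    have k1 : -v / ηd ≤ δ * X := by
      rw [div_le_iff₀ hηd0]; nlinarith
    have k2 : 0 ≤ ηc * v + δ * X := by
      nlinarith [mul_le_mul_of_nonneg_left h hηc0.le,
        mul_nonneg (mul_nonneg hδ.le hX) (mul_nonneg hηc0.le hηd0.le)]
    rw [isMinOn_iff]
    rintro ⟨a, c⟩ hx
    simp only [mem_union, mem_prod, mem_singleton_iff, mem_Icc] at hx
    dsimp only
    have mT : min D ((1 - (0:ℝ)) * P + Γ) = D := min_eq_left (by nlinarith)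
    rw [mT]
    rcases hx with ⟨ha, hc0, hc1⟩ | ⟨⟨ha0, ha1⟩, hc⟩
    · subst ha
      have m1 : min D ((1 - (0:ℝ)) * P + c) = D := min_eq_left (by nlinarith)
      rw [m1]
      have t1 : 0 ≤ (Γ - c) * (δ * X - -v / ηd) := by
        apply mul_nonneg <;> linarith
      ring_nf at t1 ⊢
      linarith [t1]
    · subst hc
      have t1 : 0 ≤ a * P * (ηc * v + δ * X) :=
        mul_nonneg (mul_nonneg ha0 hP.le) k2
      have t2 : 0 ≤ Γ * (δ * X - -v / ηd) := mul_nonneg hΓ (by linarith)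
      have t3 : 0 ≤ δ * Z * (D - min D ((1 - a) * P + 0)) :=
        mul_nonneg (mul_nonneg hδ.le hZ) (by linarith [min_le_left D ((1 - a) * P + 0)])
      ring_nf at t1 t2 t3 ⊢
      linarith [t1, t2, t3]
  -- Case 2 : minimum at (0, 0)
  · rintro ⟨h1, h2⟩
    have k1 : δ * X ≤ -v / ηd := by
      rw [le_div_iff₀ hηd0]; nlinarith
    have k2 : 0 ≤ ηc * v + δ * X := by
      have := hcd X h2; nlinarith
    rw [isMinOn_iff]
    rintro ⟨a, c⟩ hx
    simp only [mem_union, mem_prod, mem_singleton_iff, mem_Icc] at hx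
    dsimp only
    have mT : min D ((1 - (0:ℝ)) * P + 0) = D := min_eq_left (by nlinarith)
    rw [mT]
    rcases hx with ⟨ha, hc0, hc1⟩ | ⟨⟨ha0, ha1⟩, hc⟩
    · subst ha
      have m1 : min D ((1 - (0:ℝ)) * P + c) = D := min_eq_left (by nlinarith)
      rw [m1]
      have t1 : 0 ≤ c * (-v / ηd - δ * X) := mul_nonneg hc0 (by linarith)
      ring_nf at t1 ⊢
      linarith [t1]
    · subst hc
      have t1 : 0 ≤ a * P * (ηc * v + δ * X) :=
        mul_nonneg (mul_nonneg ha0 hP.le) k2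
      have t3 : 0 ≤ δ * Z * (D - min D ((1 - a) * P + 0)) :=
        mul_nonneg (mul_nonneg hδ.le hZ) (by linarith [min_le_left D ((1 - a) * P + 0)])
      ring_nf at t1 t3 ⊢
      linarith [t1, t3]
  -- Case 3 : minimum at (1 - D/P, 0)
  · rintro ⟨h1, h2⟩
    have k2 : ηc * v + δ * X ≤ 0 := by
      have := hdc X h1; nlinarith
    have k3 : 0 ≤ ηc * v + δ * (X + Z) := by
      have := hcd (X + Z) h2; nlinarith
    have k1 : δ * X ≤ -v / ηd := by
      rw [le_div_iff₀ hηd0]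
      nlinarith [mul_nonneg (neg_nonneg.2 hv) (sub_nonneg.2 hηc1),
        mul_le_mul_of_nonneg_left hηd1 (mul_nonneg hδ.le hX)]
    have hT : (ηc * (1 - D / P) * P - 0 / ηd) * v
        + δ * X * (D - (1 - (1 - D / P)) * P - 0)
        - δ * Z * min D ((1 - (1 - D / P)) * P + 0)
        = ηc * (P - D) * v - δ * Z * D := by
      have e1 : (1 - (1 - D / P)) * P + 0 = D := by field_simp; ring
      rw [e1, min_self]
      field_simp
      ring
    rw [isMinOn_iff]
    rintro ⟨a, c⟩ hx
    simp only [mem_union, mem_prod, mem_singleton_iff, mem_Icc] at hx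
    dsimp only
    rw [hT]
    rcases hx with ⟨ha, hc0, hc1⟩ | ⟨⟨ha0, ha1⟩, hc⟩
    · subst ha
      have m1 : min D ((1 - (0:ℝ)) * P + c) = D := min_eq_left (by nlinarith)
      rw [m1]
      have t1 : 0 ≤ c * (-v / ηd - δ * X) := mul_nonneg hc0 (by linarith)
      have t2 : 0 ≤ (P - D) * (-(ηc * v + δ * X)) :=
        mul_nonneg (by linarith) (by linarith)
      ring_nf at t1 t2 ⊢
      linarith [t1, t2]
    · subst hc
      rcases le_total D ((1 - a) * P + 0) with hm | hm
      · rw [min_eq_left hm]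
        have t : 0 ≤ ((1 - a) * P - D) * (-(ηc * v + δ * X)) :=
          mul_nonneg (by linarith) (by linarith)
        ring_nf at t ⊢
        linarith [t]
      · rw [min_eq_right hm]
        have t : 0 ≤ (D - ((1 - a) * P + 0)) * (ηc * v + δ * (X + Z)) :=
          mul_nonneg (by linarith) k3
        ring_nf at t ⊢
        linarith [t]
  -- Case 4 : minimum at (1, 0)
  · intro h
    have k3 : ηc * v + δ * (X + Z) ≤ 0 := by
      have := hdc (X + Z) h; nlinarith
    have k1 : δ * X ≤ -v / ηd := by
      rw [le_div_iff₀ hηd0]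
      nlinarith [mul_nonneg (neg_nonneg.2 hv) (sub_nonneg.2 hηc1),
        mul_le_mul_of_nonneg_left hηd1 (mul_nonneg hδ.le hX),
        mul_nonneg hδ.le hZ]
    rw [isMinOn_iff]
    rintro ⟨a, c⟩ hx
    simp only [mem_union, mem_prod, mem_singleton_iff, mem_Icc] at hx
    dsimp only
    have mT : min D ((1 - (1:ℝ)) * P + 0) = (1 - (1:ℝ)) * P + 0 :=
      min_eq_right (by nlinarith)
    rw [mT]
    rcases hx with ⟨ha, hc0, hc1⟩ | ⟨⟨ha0, ha1⟩, hc⟩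
    · subst ha
      have m1 : min D ((1 - (0:ℝ)) * P + c) = D := min_eq_left (by nlinarith)
      rw [m1]
      have t1 : 0 ≤ c * (-v / ηd - δ * X) := mul_nonneg hc0 (by linarith)
      have t2 : 0 ≤ P * (-(ηc * v + δ * (X + Z))) := mul_nonneg hP.le (by linarith)
      have t3 : 0 ≤ (P - D) * (δ * Z) :=
        mul_nonneg (by linarith) (mul_nonneg hδ.le hZ)
      ring_nf at t1 t2 t3 ⊢
      linarith [t1, t2, t3]
    · subst hc
      have hE : 0 ≤ (1 - a) * P + 0 := by nlinarith
      rcases le_total D ((1 - a) * P + 0) with hm | hm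
      · rw [min_eq_left hm]
        have t2 : 0 ≤ ((1 - a) * P + 0) * (-(ηc * v + δ * (X + Z))) :=
          mul_nonneg hE (by linarith)
        have t3 : 0 ≤ (((1 - a) * P + 0) - D) * (δ * Z) :=
          mul_nonneg (by linarith) (mul_nonneg hδ.le hZ)
        ring_nf at t2 t3 ⊢
        linarith [t2, t3]
      · rw [min_eq_right hm]
        have t2 : 0 ≤ ((1 - a) * P + 0) * (-(ηc * v + δ * (X + Z))) :=
          mul_nonneg hE (by linarith)
        ring_nf at t2 ⊢
        linarith [t2]
end

section
/- Fix P ≥ 0, Γ > 0, X ≥ 0, Z ≥ 0, D with P ≤ D ≤ P + Γ, v ≤ 0, η_c, η_d ∈ (0,1], δ > 0. Define on B := ({0} × [0,Γ]) ∪ ([0,1] × {0}) the function F(a,c) := (η_c·a·P − c/η_d)·v + δ·X·(D − (1−a)·P − c) − δ·Z·min(D, (1−a)·P + c). Then the minimum of F over B is attained at: (0,Γ) if −v ≤ δ·η_d·X; at (0, D − P) if δ·η_d·X ≤ −v ≤ δ·η_d·(X + Z); at (0,0) if δ·η_d·(X + Z) ≤ −v ≤ (δ/η_c)·(X + Z);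 and at (1,0) if (δ/η_c)·(X + Z) ≤ −v. -/
open Set

set_option maxHeartbeats 1000000 in
theorem stmt_4 (P Γ X Z D v ηc ηd δ : ℝ)
    (hP : 0 ≤ P) (hΓ : 0 < Γ) (hX : 0 ≤ X) (hZ : 0 ≤ Z)
    (hPD : P ≤ D) (hDPG : D ≤ P + Γ) (hv : v ≤ 0)
    (hηc : ηc ∈ Ioc (0:ℝ) 1) (hηd : ηd ∈ Ioc (0:ℝ) 1) (hδ : 0 < δ)
    (B : Set (ℝ × ℝ)) (hB : B = ({0} ×ˢ Icc (0:ℝ) Γ) ∪ (Icc (0:ℝ) 1 ×ˢ {0}))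
    (F : ℝ × ℝ → ℝ)
    (hF : F = fun q => (ηc * q.1 * P - q.2 / ηd) * v
        + δ * X * (D - (1 - q.1) * P - q.2)
        - δ * Z * min D ((1 - q.1) * P + q.2)) :
    (-v ≤ δ * ηd * X → IsMinOn F B (0, Γ)) ∧
    (δ * ηd * X ≤ -v ∧ -v ≤ δ * ηd * (X + Z) → IsMinOn F B (0, D - P)) ∧
    (δ * ηd * (X + Z) ≤ -v ∧ -v ≤ (δ / ηc) * (X + Z) → IsMinOn F B (0, 0)) ∧
    ((δ / ηc) * (X + Z) ≤ -v → IsMinOn F B (1, 0)) := by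
  obtain ⟨hc0, hc1⟩ := hηc
  obtain ⟨hd0, hd1⟩ := hηd
  subst hB hF
  have hDP : (0:ℝ) ≤ D - P := by linarith
  refine ⟨?_, ?_, ?_, ?_⟩
  · intro h
    have k1 : -(δ*X) ≤ v * ηd⁻¹ := by
      rw [← div_eq_mul_inv]; exact (le_div_iff₀ hd0).mpr (by nlinarith)
    have k2 : 0 ≤ ηc * v + δ*X + δ*Z := by
      nlinarith [mul_le_mul_of_nonneg_left (show -(δ*(ηd*X)) ≤ v by linarith) hc0.le,
        mul_nonneg (mul_nonneg hδ.le hX) (show (0:ℝ) ≤ 1 - ηc*ηd by nlinarith)]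
    rw [isMinOn_iff]
    rintro ⟨a, c⟩ hq
    simp only [mem_union, mem_prod, mem_singleton_iff, mem_Icc] at hq
    have hmin : min D ((1-(0:ℝ))*P + Γ) = D := min_eq_left (by nlinarith)
    simp only [hmin, div_eq_mul_inv]
    rcases hq with ⟨rfl, hc, hcΓ⟩ | ⟨⟨ha0, ha1⟩, rfl⟩
    · have hm : min D ((1-(0:ℝ))*P + c) ≤ D := min_le_left _ _
      generalize hg : D ⊓ ((1-(0:ℝ))*P + c) = m at hm ⊢
      nlinarith [mul_nonneg (by linarith : (0:ℝ) ≤ v*ηd⁻¹ + δ*X) (by linarith : (0:ℝ) ≤ Γ - c),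
        mul_nonneg (mul_nonneg hδ.le hZ) (sub_nonneg.mpr hm)]
    · have hm : min D ((1-a)*P + 0) = (1-a)*P + 0 := min_eq_right (by nlinarith)
      simp only [hm]
      nlinarith [mul_nonneg (mul_nonneg ha0 hP) k2,
        mul_nonneg hΓ.le (by linarith : (0:ℝ) ≤ v*ηd⁻¹ + δ*X),
        mul_nonneg (mul_nonneg hδ.le hZ) hDP]
  · rintro ⟨h1, h2⟩
    have k3 : -(δ*(X+Z)) ≤ v * ηd⁻¹ := by
      rw [← div_eq_mul_inv]; exact (le_div_iff₀ hd0).mpr (by nlinarith)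
    have k4 : v * ηd⁻¹ ≤ -(δ*X) := by
      rw [← div_eq_mul_inv]; exact (div_le_iff₀ hd0).mpr (by nlinarith)
    have k2 : 0 ≤ ηc * v + δ*X + δ*Z := by
      nlinarith [mul_le_mul_of_nonneg_left (show -(δ*(ηd*(X+Z))) ≤ v by nlinarith) hc0.le,
        mul_nonneg (mul_nonneg hδ.le (by linarith : (0:ℝ) ≤ X + Z)) (show (0:ℝ) ≤ 1 - ηc*ηd by nlinarith)]
    rw [isMinOn_iff]
    rintro ⟨a, c⟩ hq
    simp only [mem_union, mem_prod, mem_singleton_iff, mem_Icc] at hq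
    have hmin : min D ((1-(0:ℝ))*P + (D-P)) = D := min_eq_left (by nlinarith)
    simp only [hmin, div_eq_mul_inv]
    rcases hq with ⟨rfl, hc, hcΓ⟩ | ⟨⟨ha0, ha1⟩, rfl⟩
    · rcases le_total ((1-(0:ℝ))*P + c) D with hm | hm
      · rw [min_eq_right hm]
        nlinarith [mul_nonneg (by linarith : (0:ℝ) ≤ v*ηd⁻¹ + δ*(X+Z)) (by nlinarith : (0:ℝ) ≤ D - P - c)]
      · rw [min_eq_left hm]
        nlinarith [mul_nonneg (by linarith : (0:ℝ) ≤ -(v*ηd⁻¹) - δ*X) (by nlinarith : (0:ℝ) ≤ c - (D - P))]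
    · have hm : min D ((1-a)*P + 0) = (1-a)*P + 0 := min_eq_right (by nlinarith)
      simp only [hm]
      nlinarith [mul_nonneg (mul_nonneg ha0 hP) k2,
        mul_nonneg hDP (by linarith : (0:ℝ) ≤ v*ηd⁻¹ + δ*(X+Z))]
  · rintro ⟨h1, h2⟩
    have k3 : v * ηd⁻¹ ≤ -(δ*(X+Z)) := by
      rw [← div_eq_mul_inv]; exact (div_le_iff₀ hd0).mpr (by nlinarith)
    rw [show (δ/ηc)*(X+Z) = δ*(X+Z)/ηc from by ring, le_div_iff₀ hc0] at h2
    have k2 : 0 ≤ ηc * v + δ*X + δ*Z := by nlinarith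
    rw [isMinOn_iff]
    rintro ⟨a, c⟩ hq
    simp only [mem_union, mem_prod, mem_singleton_iff, mem_Icc] at hq
    have hmin : min D ((1-(0:ℝ))*P + 0) = (1-(0:ℝ))*P + 0 := min_eq_right (by nlinarith)
    simp only [hmin, div_eq_mul_inv]
    rcases hq with ⟨rfl, hc, hcΓ⟩ | ⟨⟨ha0, ha1⟩, rfl⟩
    · rcases le_total ((1-(0:ℝ))*P + c) D with hm | hm
      · rw [min_eq_right hm]
        nlinarith [mul_nonneg hc (by linarith : (0:ℝ) ≤ -(v*ηd⁻¹) - δ*(X+Z))]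
      · rw [min_eq_left hm]
        nlinarith [mul_nonneg hc (by linarith : (0:ℝ) ≤ -(v*ηd⁻¹) - δ*(X+Z)),
          mul_nonneg (mul_nonneg hδ.le hZ) (by nlinarith : (0:ℝ) ≤ c - (D-P))]
    · have hm : min D ((1-a)*P + 0) = (1-a)*P + 0 := min_eq_right (by nlinarith)
      simp only [hm]
      nlinarith [mul_nonneg (mul_nonneg ha0 hP) k2]
  · intro h
    rw [show (δ/ηc)*(X+Z) = δ*(X+Z)/ηc from by ring, div_le_iff₀ hc0] at h
    have hv' : δ*(X+Z) ≤ -v := by nlinarith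
    have k3 : v * ηd⁻¹ ≤ -(δ*(X+Z)) := by
      rw [← div_eq_mul_inv]; exact (div_le_iff₀ hd0).mpr (by nlinarith)
    rw [isMinOn_iff]
    rintro ⟨a, c⟩ hq
    simp only [mem_union, mem_prod, mem_singleton_iff, mem_Icc] at hq
    have hmin : min D ((1-(1:ℝ))*P + 0) = (1-(1:ℝ))*P + 0 := min_eq_right (by nlinarith)
    simp only [hmin, div_eq_mul_inv]
    rcases hq with ⟨rfl, hc, hcΓ⟩ | ⟨⟨ha0, ha1⟩, rfl⟩
    · have hm : min D ((1-(0:ℝ))*P + c) ≤ (1-(0:ℝ))*P + c := min_le_right _ _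
      generalize hg : D ⊓ ((1-(0:ℝ))*P + c) = m at hm ⊢
      nlinarith [mul_nonneg hc (by linarith : (0:ℝ) ≤ -(v*ηd⁻¹) - δ*(X+Z)),
        mul_nonneg hP (by nlinarith : (0:ℝ) ≤ -(ηc*v) - δ*(X+Z)),
        mul_nonneg (mul_nonneg hδ.le hZ) (by nlinarith : (0:ℝ) ≤ P + c - m)]
    · have hm : min D ((1-a)*P + 0) = (1-a)*P + 0 := min_eq_right (by nlinarith)
      simp only [hm]
      nlinarith [mul_nonneg (mul_nonneg (by linarith : (0:ℝ) ≤ 1 - a) hP) (by nlinarith : (0:ℝ) ≤ -(ηc*v) - δ*(X+Z))]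
end
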